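/- Let Λ be a finite species set, let S ⊆ Λ be a set of species with d ∉ S, and consider the CRN with the (2,1) catalytic rules d + s → d for every s ∈ S and the (2,0) void rule d + d → ∅. For any configuration C over Λ ∖ {d}, consider the 2-step step CRN that starts step 1 from C plus one copy of d and adds one further copy of d at step 2. Then the unique terminal configuration after step 2 is C with all copies of every species of S removed and zero copies of d; i.e., the deletion gadget removes exactly the species in S and then eliminates the deleter species. -/

import Mathlib

/-! ### Chemical Reaction Networks (CRNs) and step CRNs -/

/-- A reaction rule: an ordered pair of multisets (reactants, products). -/
structure Rule (Λ : Type) where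
  reactants : Multiset Λ
  products : Multiset Λ
deriving DecidableEq

namespace Rule

/-- A `(2,0)` void rule: exactly two reactants and no products. -/
def IsVoid20 {Λ : Type} (R : Rule Λ) : Prop :=
  Multiset.card R.reactants = 2 ∧ R.products = 0

/-- A `(2,1)` catalytic rule: two reactants, one product which is one of the reactants. -/
def IsCat21 {Λ : Type} (R : Rule Λ) : Prop :=
  Multiset.card R.reactants = 2 ∧ Multiset.card R.products = 1 ∧ R.products ≤ R.reactants

/-- A void rule: the products form a strict submultiset of the reactants. -/
def IsVoid {Λ : Type} (R : Rule Λ) : Prop := R.products < R.reactants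

end Rule

/-- A single rule application: some rule of `Γ` is applicable to `C` and transforms it to `C'`. -/
def RStep {Λ : Type} [DecidableEq Λ] (Γ : Finset (Rule Λ)) (C C' : Multiset Λ) : Prop :=
  ∃ R ∈ Γ, R.reactants ≤ C ∧ C' = C - R.reactants + R.products

/-- Reachability: the reflexive-transitive closure of single rule application. -/
def Reaches {Λ : Type} [DecidableEq Λ] (Γ : Finset (Rule Λ)) : Multiset Λ → Multiset Λ → Prop :=
  Relation.ReflTransGen (RStep Γ)

/-- A configuration is terminal if no rule of `Γ` is applicable to it. -/
def Terminal {Λ : Type} (Γ : Finset (Rule Λ)) (C : Multiset Λ) : Prop :=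
  ∀ R ∈ Γ, ¬ R.reactants ≤ C

/-- The set of terminal configurations reachable from `S` after adding `s` (one step). -/
def stepTerm {Λ : Type} [DecidableEq Λ] (Γ : Finset (Rule Λ)) (S : Set (Multiset Λ)) (s : Multiset Λ) :
    Set (Multiset Λ) :=
  {T | ∃ c ∈ S, Reaches Γ (c + s) T ∧ Terminal Γ T}

/-- `TERM_k`: terminal configurations after running the step CRN with step sequence `ss`. -/
def termAfter {Λ : Type} [DecidableEq Λ] (Γ : Finset (Rule Λ)) (ss : List (Multiset Λ)) : Set (Multiset Λ) :=
  ss.foldl (stepTerm Γ) {0}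

/-- All configurations reachable during any step, starting from terminal sets `S`. -/
def reachDuring {Λ : Type} [DecidableEq Λ] (Γ : Finset (Rule Λ)) :
    Set (Multiset Λ) → List (Multiset Λ) → Set (Multiset Λ)
  | _, [] => ∅
  | S, s :: rest =>
      {C | ∃ c ∈ S, Reaches Γ (c + s) C} ∪ reachDuring Γ (stepTerm Γ S s) rest

/-- All configurations reachable at any step of the step CRN `(Γ, ss)`. -/
def reachAll {Λ : Type} [DecidableEq Λ] (Γ : Finset (Rule Λ)) (ss : List (Multiset Λ)) : Set (Multiset Λ) :=
  reachDuring Γ {0} ss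

/-- Add the input configuration `X` to the first step of the step sequence. -/
def addToHead {Λ : Type} (X : Multiset Λ) : List (Multiset Λ) → List (Multiset Λ)
  | [] => [X]
  | s :: rest => (X + s) :: rest

/-- The rules of the deletion gadget: `(2,1)` catalytic rules `d + s → d` for `s ∈ S` and the
`(2,0)` void rule `d + d → ∅`. -/
def delRules {Λ : Type} [DecidableEq Λ] (S : Finset Λ) (d : Λ) : Finset (Rule Λ) :=
  insert (⟨{d, d}, 0⟩ : Rule Λ) (S.image fun s => (⟨{d, s}, {d}⟩ : Rule Λ))

section Aux

variable {Λ : Type} [DecidableEq Λ]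

lemma mem_delRules (S : Finset Λ) (d : Λ) {R : Rule Λ} :
    R ∈ delRules S d ↔ R = ⟨{d, d}, 0⟩ ∨ ∃ s ∈ S, R = ⟨{d, s}, {d}⟩ := by
  simp [delRules, eq_comm]

lemma count_pair (x a b : Λ) :
    Multiset.count x ({a, b} : Multiset Λ) =
      (if x = a then 1 else 0) + (if x = b then 1 else 0) := by
  rw [Multiset.insert_eq_cons, Multiset.count_cons, Multiset.count_singleton]
  omega

end Aux

/-- The deletion gadget: for `d ∉ S` and any configuration `C` containing
no `d`, the 2-step step CRN with rules `d + s → d` (`s ∈ S`) and `d + d → ∅`, starting step 1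
from `C` plus one copy of `d` and adding one further copy of `d` at step 2, has as unique
terminal configuration after step 2 exactly `C` with all copies of the species of `S` removed
and zero copies of `d`. -/
theorem stmt13 {Λ : Type} [DecidableEq Λ] (S : Finset Λ) (d : Λ) (hd : d ∉ S)
    (C : Multiset Λ) (hC : C.count d = 0) :
    ∀ T : Multiset Λ,
      T ∈ termAfter (delRules S d) [C + {d}, {d}] ↔ T = C.filter fun s => s ∉ S := by
  intro T
  set Γ := delRules S d with hΓ
  set F : Multiset Λ := C.filter (fun s => s ∉ S) with hF
  have hFd : F.count d = 0 := by
    rw [hF, Multiset.count_filter]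
    simp [hd, hC]
  have hFs : ∀ s ∈ S, F.count s = 0 := by
    intro s hs
    rw [hF, Multiset.count_filter]
    simp [hs]
  have hFx : ∀ x, x ∉ S → F.count x = C.count x := by
    intro x hx
    rw [hF, Multiset.count_filter]
    simp [hx]
  have hsd : ∀ s ∈ S, s ≠ d := fun s hs h => hd (h ▸ hs)
  -- Phase-1 invariant
  have inv1 : ∀ X, Reaches Γ (C + {d}) X → F + {d} ≤ X ∧ X ≤ C + {d} := by
    intro X hX
    induction hX with
    | refl =>
        exact ⟨add_le_add (Multiset.filter_le _ _) (le_refl _), le_refl _⟩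
    | tail _ hstep ih =>
        obtain ⟨hlow, hhigh⟩ := ih
        obtain ⟨R, hR, hle, rfl⟩ := hstep
        rcases (mem_delRules S d).1 hR with rfl | ⟨s, hs, rfl⟩
        · exfalso
          have h2 := Multiset.count_le_of_le d hle
          have hb := Multiset.count_le_of_le d hhigh
          rw [count_pair] at h2
          rw [Multiset.count_add, Multiset.count_singleton] at hb
          simp only [if_pos rfl, if_true, hC] at h2 hb
          omega
        · have hds : s ≠ d := hsd s hs
          constructor
          · rw [Multiset.le_iff_count]
            intro x
            have h1 := Multiset.count_le_of_le x hlow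
            have h2 := Multiset.count_le_of_le x hle
            simp only [Multiset.count_add, Multiset.count_sub, count_pair,
              Multiset.count_singleton] at h1 h2 ⊢
            rcases eq_or_ne x s with rfl | hxs
            · have h3 := hFs x hs
              simp only [if_pos rfl, if_true, if_neg (hsd x hs)] at h1 h2 ⊢
              omega
            · simp only [if_neg hxs] at h2 ⊢
              rcases eq_or_ne x d with rfl | hxd
              · simp only [if_pos rfl, if_true] at h1 h2 ⊢
                omega
              · simp only [if_neg hxd] at h1 h2 ⊢
                omega
          · refine le_trans ?_ hhigh
            rw [Multiset.le_iff_count]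
            intro x
            have h2 := Multiset.count_le_of_le x hle
            simp only [Multiset.count_add, Multiset.count_sub, count_pair,
              Multiset.count_singleton] at h2 ⊢
            rcases eq_or_ne x s with rfl | hxs
            · simp only [if_pos rfl, if_true, if_neg (hsd x hs)] at h2 ⊢
              omega
            · simp only [if_neg hxs] at h2 ⊢
              rcases eq_or_ne x d with rfl | hxd
              · simp only [if_pos rfl, if_true] at h2 ⊢
                omega
              · simp only [if_neg hxd] at h2 ⊢
                omega
  -- terminal characterization in phase 1
  have term1 : ∀ X, F + {d} ≤ X → X ≤ C + {d} → Terminal Γ X → X = F + {d} := by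
    intro X hlow hhigh hterm
    have hXd : X.count d = 1 := by
      have a := Multiset.count_le_of_le d hlow
      have b := Multiset.count_le_of_le d hhigh
      simp only [Multiset.count_add, Multiset.count_singleton, if_pos rfl, if_true, hFd, hC] at a b
      omega
    ext x
    have h1 := Multiset.count_le_of_le x hlow
    have h2 := Multiset.count_le_of_le x hhigh
    simp only [Multiset.count_add, Multiset.count_singleton] at h1 h2 ⊢
    by_cases hx : x ∈ S
    · have hcat := hterm _ ((mem_delRules S d).2 (Or.inr ⟨x, hx, rfl⟩))
      have hXx : X.count x = 0 := by
        by_contra h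
        apply hcat
        rw [Multiset.le_iff_count]
        intro y
        rw [count_pair]
        rcases eq_or_ne y d with rfl | hyd
        · simp only [if_pos rfl, if_true, if_neg (Ne.symm (hsd x hx))]
          omega
        · rcases eq_or_ne y x with rfl | hyx
          · simp only [if_pos rfl, if_true, if_neg hyd]
            omega
          · simp only [if_neg hyd, if_neg hyx]
            omega
      rw [hXx, hFs x hx, if_neg (hsd x hx)]
    · rcases eq_or_ne x d with rfl | hxd
      · simp only [if_pos rfl, if_true] at h1 h2 ⊢
        omega
      · have h3 := hFx x hx
        simp only [if_neg hxd, hC] at h1 h2 ⊢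
        omega
  -- phase 1 reachability
  have reach1 : Reaches Γ (C + {d}) (F + {d}) := by
    have key : ∀ G : Multiset Λ, (∀ x ∈ G, x ∈ S) → Reaches Γ (F + G + {d}) (F + {d}) := by
      intro G
      induction G using Multiset.induction_on with
      | empty =>
          intro _
          rw [add_zero]
          exact Relation.ReflTransGen.refl
      | cons a G ih =>
          intro hmem
          have ha : a ∈ S := hmem a (Multiset.mem_cons_self a G)
          have had : a ≠ d := hsd a ha
          have step : RStep Γ (F + (a ::ₘ G) + {d}) (F + G + {d}) := by
            refine ⟨⟨{d, a}, {d}⟩, (mem_delRules S d).2 (Or.inr ⟨a, ha, rfl⟩), ?_, ?_⟩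
            · rw [Multiset.le_iff_count]
              intro y
              simp only [count_pair, Multiset.count_add, Multiset.count_cons,
                Multiset.count_singleton]
              rcases eq_or_ne y d with rfl | hyd
              · simp only [if_pos rfl, if_true, if_neg (Ne.symm had)]
                omega
              · rcases eq_or_ne y a with rfl | hya
                · simp only [if_pos rfl, if_true, if_neg hyd]
                  omega
                · simp only [if_neg hyd, if_neg hya]
                  omega
            · ext y
              simp only [Multiset.count_add, Multiset.count_sub, count_pair,
                Multiset.count_cons, Multiset.count_singleton]
              rcases eq_or_ne y d with rfl | hyd
              · simp only [if_pos rfl, if_true, if_neg (Ne.symm had)]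
                omega
              · rcases eq_or_ne y a with rfl | hya
                · simp only [if_pos rfl, if_true, if_neg hyd]
                  omega
                · simp only [if_neg hyd, if_neg hya]
                  omega
          exact Relation.ReflTransGen.head step (ih (fun x hx => hmem x (Multiset.mem_cons_of_mem hx)))
    have hsplit : F + C.filter (fun s => ¬ s ∉ S) = C := Multiset.filter_add_not _ _
    have h := key (C.filter (fun s => ¬ s ∉ S)) (by
      intro x hx
      have := Multiset.of_mem_filter hx
      simpa using this)
    rwa [hsplit] at h
  have termF1 : Terminal Γ (F + {d}) := by
    intro R hR hle
    rcases (mem_delRules S d).1 hR with rfl | ⟨s, hs, rfl⟩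
    · have h := Multiset.count_le_of_le d hle
      simp only [count_pair, Multiset.count_add, Multiset.count_singleton, if_pos rfl, if_true, hFd] at h
      omega
    · have h := Multiset.count_le_of_le s hle
      simp only [count_pair, Multiset.count_add, Multiset.count_singleton,
        if_pos rfl, if_true, if_neg (hsd s hs), hFs s hs] at h
      omega
  -- phase 2
  have appliesF : ∀ R ∈ Γ, ¬ R.reactants ≤ F := by
    intro R hR hle
    rcases (mem_delRules S d).1 hR with rfl | ⟨s, hs, rfl⟩
    · have h := Multiset.count_le_of_le d hle
      simp only [count_pair, if_pos rfl, if_true, hFd] at h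
      omega
    · have h := Multiset.count_le_of_le d hle
      simp only [count_pair, if_pos rfl, if_true, if_neg (Ne.symm (hsd s hs)), hFd] at h
      omega
  have inv2 : ∀ X, Reaches Γ (F + {d} + {d}) X → X = F + {d} + {d} ∨ X = F := by
    intro X hX
    induction hX with
    | refl => exact Or.inl rfl
    | tail _ hstep ih =>
        obtain ⟨R, hR, hle, rfl⟩ := hstep
        rcases ih with rfl | rfl
        · rcases (mem_delRules S d).1 hR with rfl | ⟨s, hs, rfl⟩
          · right
            ext y
            simp only [Multiset.count_add, Multiset.count_sub, count_pair,
              Multiset.count_singleton, Multiset.count_zero]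
            rcases eq_or_ne y d with rfl | hyd
            · simp only [if_pos rfl, if_true, hFd]
            · simp only [if_neg hyd]
              omega
          · exfalso
            have h := Multiset.count_le_of_le s hle
            simp only [count_pair, Multiset.count_add, Multiset.count_singleton,
              if_pos rfl, if_true, if_neg (hsd s hs), hFs s hs] at h
            omega
        · exact absurd hle (appliesF R hR)
  have notTerm2 : ¬ Terminal Γ (F + {d} + {d}) := by
    intro h
    apply h ⟨{d, d}, 0⟩ ((mem_delRules S d).2 (Or.inl rfl))
    rw [Multiset.le_iff_count]
    intro y
    simp only [count_pair, Multiset.count_add, Multiset.count_singleton]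
    rcases eq_or_ne y d with rfl | hyd
    · simp only [if_pos rfl, if_true]
      omega
    · simp only [if_neg hyd]
      omega
  have reach2 : Reaches Γ (F + {d} + {d}) F := by
    refine Relation.ReflTransGen.single ⟨⟨{d, d}, 0⟩, (mem_delRules S d).2 (Or.inl rfl), ?_, ?_⟩
    · rw [Multiset.le_iff_count]
      intro y
      simp only [count_pair, Multiset.count_add, Multiset.count_singleton]
      rcases eq_or_ne y d with rfl | hyd
      · simp only [if_pos rfl, if_true]
        omega
      · simp only [if_neg hyd]
        omega
    · ext y
      simp only [Multiset.count_add, Multiset.count_sub, count_pair,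
        Multiset.count_singleton, Multiset.count_zero]
      rcases eq_or_ne y d with rfl | hyd
      · simp only [if_pos rfl, if_true]
        omega
      · simp only [if_neg hyd]
        omega
  -- assemble
  have hTA : termAfter Γ [C + {d}, {d}] = stepTerm Γ (stepTerm Γ {0} (C + {d})) {d} := rfl
  constructor
  · rintro hT
    rw [hTA] at hT
    obtain ⟨c, hc, hreach, hterm⟩ := hT
    obtain ⟨c0, hc0, hr0, ht0⟩ := hc
    rw [Set.mem_singleton_iff] at hc0
    subst hc0
    rw [zero_add] at hr0
    obtain ⟨hlow, hhigh⟩ := inv1 c hr0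
    have hcF : c = F + {d} := term1 c hlow hhigh ht0
    subst hcF
    rcases inv2 T hreach with rfl | rfl
    · exact absurd hterm notTerm2
    · rfl
  · rintro rfl
    rw [hTA]
    exact ⟨F + {d}, ⟨0, rfl, by rwa [zero_add], termF1⟩, reach2, appliesF⟩
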